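/- For every nonnegative integer K, every p with 1 ≤ p ≤ ∞, and all K-order networks N_X, N_Y, N_Z, the p-norm network distance satisfies the triangle inequality d_{N,p}(N_X,N_Y) ≤ d_{N,p}(N_X,N_Z) + d_{N,p}(N_Z,N_Y). -/
import Mathlib


open scoped ENNReal

/-- A correspondence between node sets `X` and `Y`: a set of pairs in which every
`x : X` and every `y : Y` appears. -/
def IsCorrespondence {X Y : Type} (C : Set (X × Y)) : Prop :=
  (∀ x : X, ∃ y : Y, (x, y) ∈ C) ∧ (∀ y : Y, ∃ x : X, (x, y) ∈ C)

/-- The rank of a tuple: the number of distinct elements appearing in it. -/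
noncomputable def tupleRank {X : Type} {n : ℕ} (t : Fin n → X) : ℕ :=
  Set.ncard (Set.range t)

/-- A `K`-order network on a finite nonempty node set `X`: relationship functions
`r k : X^{k+1} → [0,1]` for `0 ≤ k ≤ K`, symmetric under permutations of the arguments,
and such that any subtuple with the same set of distinct elements as the full tuple
carries the same relationship value. -/
structure HONetwork (K : ℕ) (X : Type) [Fintype X] [Nonempty X] : Type where
  r : ∀ k : ℕ, (Fin (k + 1) → X) → ℝ
  r_nonneg : ∀ k, k ≤ K → ∀ t : Fin (k + 1) → X, 0 ≤ r k t
  r_le_one : ∀ k, k ≤ K → ∀ t : Fin (k + 1) → X, r k t ≤ 1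
  symm : ∀ k, k ≤ K → ∀ (t : Fin (k + 1) → X) (σ : Equiv.Perm (Fin (k + 1))),
    r k (t ∘ σ) = r k t
  identity : ∀ k, k ≤ K → ∀ k', k' ≤ K → ∀ (t : Fin (k + 1) → X)
    (ι : Fin (k' + 1) → Fin (k + 1)), StrictMono ι →
    Set.range (t ∘ ι) = Set.range t → r k' (t ∘ ι) = r k t

/-- The `k`-order network difference `Γ^k_{X,Y}(C)`: the largest value of
`|r_X^k(x_{0:k}) − r_Y^k(y_{0:k})|` over tuples of pairs of correspondents in `C`. -/
noncomputable def Gamma {K : ℕ} {X Y : Type} [Fintype X] [Nonempty X] [Fintype Y] [Nonempty Y]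
    (NX : HONetwork K X) (NY : HONetwork K Y) (k : ℕ) (C : Set (X × Y)) : ℝ :=
  sSup { v : ℝ | ∃ (tx : Fin (k + 1) → X) (ty : Fin (k + 1) → Y),
    (∀ i, (tx i, ty i) ∈ C) ∧ v = |NX.r k tx - NY.r k ty| }

/-- The `k`-order network distance: minimum of `Γ^k_{X,Y}(C)` over correspondences `C`. -/
noncomputable def dN {K : ℕ} {X Y : Type} [Fintype X] [Nonempty X] [Fintype Y] [Nonempty Y]
    (k : ℕ) (NX : HONetwork K X) (NY : HONetwork K Y) : ℝ :=
  sInf { v : ℝ | ∃ C : Set (X × Y), IsCorrespondence C ∧ v = Gamma NX NY k C }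

/-- The `p`-norm of a vector in `ℝ^{K+1}`, `1 ≤ p ≤ ∞`. -/
noncomputable def pNorm (K : ℕ) (p : ℝ≥0∞) [Fact (1 ≤ p)] (v : Fin (K + 1) → ℝ) : ℝ :=
  ‖(WithLp.equiv p (Fin (K + 1) → ℝ)).symm v‖

/-- The `p`-norm network distance: minimum over correspondences `C` of the `p`-norm of the
vector `(Γ^0_{X,Y}(C), …, Γ^K_{X,Y}(C))`. -/
noncomputable def dNp {K : ℕ} {X Y : Type} [Fintype X] [Nonempty X] [Fintype Y] [Nonempty Y]
    (p : ℝ≥0∞) [Fact (1 ≤ p)] (NX : HONetwork K X) (NY : HONetwork K Y) : ℝ :=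
  sInf { v : ℝ | ∃ C : Set (X × Y), IsCorrespondence C ∧
    v = pNorm K p (fun k : Fin (K + 1) => Gamma NX NY (k : ℕ) C) }

/-- Two `K`-order networks are `k`-isomorphic if a bijection of the node sets preserves the
`k`-order relationship functions. -/
def kIsomorphic {K : ℕ} {X Y : Type} [Fintype X] [Nonempty X] [Fintype Y] [Nonempty Y]
    (k : ℕ) (NX : HONetwork K X) (NY : HONetwork K Y) : Prop :=
  ∃ φ : X ≃ Y, ∀ t : Fin (k + 1) → X, NY.r k (fun i => φ (t i)) = NX.r k t

/-- Two `K`-order networks are isomorphic if a bijection of the node sets preserves the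
`k`-order relationship functions for all `0 ≤ k ≤ K`. -/
def Isomorphic {K : ℕ} {X Y : Type} [Fintype X] [Nonempty X] [Fintype Y] [Nonempty Y]
    (NX : HONetwork K X) (NY : HONetwork K Y) : Prop :=
  ∃ φ : X ≃ Y, ∀ k, k ≤ K → ∀ t : Fin (k + 1) → X, NY.r k (fun i => φ (t i)) = NX.r k t

/-- A `K`-order dissimilarity network: a `K`-order network whose relationship functions
decompose as `r^k = d^k + ε · rank`, with nonnegative dissimilarity functions `d^k`
satisfying the order increasing property, and `0 < ε ≤ 1 − (1/K) · max d^K`. -/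
structure DissimNetwork (K : ℕ) (X : Type) [Fintype X] [Nonempty X]
    extends HONetwork K X where
  dfun : ∀ k : ℕ, (Fin (k + 1) → X) → ℝ
  eps : ℝ
  dfun_nonneg : ∀ k, k ≤ K → ∀ t : Fin (k + 1) → X, 0 ≤ dfun k t
  decomp : ∀ k, k ≤ K → ∀ t : Fin (k + 1) → X,
    r k t = dfun k t + eps * (tupleRank t : ℝ)
  order_incr : ∀ k : ℕ, k + 1 ≤ K → ∀ t : Fin (k + 2) → X,
    dfun k (fun i : Fin (k + 1) => t i.castSucc) ≤ dfun (k + 1) t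
  eps_pos : 0 < eps
  eps_le : ∀ t : Fin (K + 1) → X, eps ≤ 1 - (1 / (K : ℝ)) * dfun K t

/-- A `K`-order proximity network: a `K`-order network whose relationship functions
decompose as `r^k = p^k − ε · rank`, with nonnegative proximity functions `p^k`
satisfying the order decreasing property, and `0 < ε ≤ (1/K) · min p^K`. -/
structure ProxNetwork (K : ℕ) (X : Type) [Fintype X] [Nonempty X]
    extends HONetwork K X where
  pfun : ∀ k : ℕ, (Fin (k + 1) → X) → ℝ
  eps : ℝ
  pfun_nonneg : ∀ k, k ≤ K → ∀ t : Fin (k + 1) → X, 0 ≤ pfun k t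
  decomp : ∀ k, k ≤ K → ∀ t : Fin (k + 1) → X,
    r k t = pfun k t - eps * (tupleRank t : ℝ)
  order_decr : ∀ k : ℕ, k + 1 ≤ K → ∀ t : Fin (k + 2) → X,
    pfun (k + 1) t ≤ pfun k (fun i : Fin (k + 1) => t i.castSucc)
  eps_pos : 0 < eps
  eps_le : ∀ t : Fin (K + 1) → X, eps ≤ (1 / (K : ℝ)) * pfun K t

section Aux

variable {K : ℕ} {X Y Z : Type} [Fintype X] [Nonempty X] [Fintype Y] [Nonempty Y]
  [Fintype Z] [Nonempty Z]

/-- Composition of correspondences. -/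
def compCorr (C1 : Set (X × Z)) (C2 : Set (Z × Y)) : Set (X × Y) :=
  {q | ∃ z : Z, (q.1, z) ∈ C1 ∧ (z, q.2) ∈ C2}

lemma compCorr_isCorr {C1 : Set (X × Z)} {C2 : Set (Z × Y)}
    (h1 : IsCorrespondence C1) (h2 : IsCorrespondence C2) :
    IsCorrespondence (compCorr C1 C2) := by
  constructor
  · intro x
    obtain ⟨z, hz⟩ := h1.1 x
    obtain ⟨y, hy⟩ := h2.1 z
    exact ⟨y, z, hz, hy⟩
  · intro y
    obtain ⟨z, hz⟩ := h2.2 y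
    obtain ⟨x, hx⟩ := h1.2 z
    exact ⟨x, z, hx, hz⟩

lemma gamma_bddAbove (NX : HONetwork K X) (NY : HONetwork K Y) {k : ℕ} (hk : k ≤ K)
    (C : Set (X × Y)) :
    BddAbove { v : ℝ | ∃ (tx : Fin (k + 1) → X) (ty : Fin (k + 1) → Y),
      (∀ i, (tx i, ty i) ∈ C) ∧ v = |NX.r k tx - NY.r k ty| } := by
  refine ⟨1, ?_⟩
  rintro v ⟨tx, ty, -, rfl⟩
  have h1 := NX.r_nonneg k hk tx
  have h2 := NX.r_le_one k hk tx
  have h3 := NY.r_nonneg k hk ty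
  have h4 := NY.r_le_one k hk ty
  rw [abs_le]
  constructor <;> linarith

lemma gamma_nonneg (NX : HONetwork K X) (NY : HONetwork K Y) (k : ℕ) (C : Set (X × Y)) :
    0 ≤ Gamma NX NY k C := by
  apply Real.sSup_nonneg
  rintro v ⟨tx, ty, -, rfl⟩
  exact abs_nonneg _

lemma le_gamma (NX : HONetwork K X) (NY : HONetwork K Y) {k : ℕ} (hk : k ≤ K)
    {C : Set (X × Y)} {tx : Fin (k + 1) → X} {ty : Fin (k + 1) → Y}
    (h : ∀ i, (tx i, ty i) ∈ C) :
    |NX.r k tx - NY.r k ty| ≤ Gamma NX NY k C :=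
  le_csSup (gamma_bddAbove NX NY hk C) ⟨tx, ty, h, rfl⟩

lemma gamma_comp_le (NX : HONetwork K X) (NZ : HONetwork K Z) (NY : HONetwork K Y)
    {k : ℕ} (hk : k ≤ K) (C1 : Set (X × Z)) (C2 : Set (Z × Y)) :
    Gamma NX NY k (compCorr C1 C2) ≤ Gamma NX NZ k C1 + Gamma NZ NY k C2 := by
  apply Real.sSup_le
  · rintro v ⟨tx, ty, hmem, rfl⟩
    have hz : ∀ i, ∃ z : Z, (tx i, z) ∈ C1 ∧ (z, ty i) ∈ C2 := fun i => hmem i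
    choose tz hz1 hz2 using hz
    calc |NX.r k tx - NY.r k ty|
        ≤ |NX.r k tx - NZ.r k tz| + |NZ.r k tz - NY.r k ty| := abs_sub_le _ _ _
      _ ≤ Gamma NX NZ k C1 + Gamma NZ NY k C2 :=
          add_le_add (le_gamma NX NZ hk hz1) (le_gamma NZ NY hk hz2)
  · exact add_nonneg (gamma_nonneg NX NZ k C1) (gamma_nonneg NZ NY k C2)

lemma pNorm_nonneg (K : ℕ) (p : ℝ≥0∞) [Fact (1 ≤ p)] (v : Fin (K + 1) → ℝ) :
    0 ≤ pNorm K p v := norm_nonneg _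

lemma pNorm_mono (K : ℕ) (p : ℝ≥0∞) [Fact (1 ≤ p)] {a b : Fin (K + 1) → ℝ}
    (ha : ∀ i, 0 ≤ a i) (hab : ∀ i, a i ≤ b i) : pNorm K p a ≤ pNorm K p b := by
  have habs : ∀ i, |a i| ≤ |b i| := by
    intro i
    rw [abs_of_nonneg (ha i), abs_of_nonneg ((ha i).trans (hab i))]
    exact hab i
  unfold pNorm
  rcases eq_or_ne p ∞ with hp | hp
  · subst hp
    rw [PiLp.norm_eq_ciSup, PiLp.norm_eq_ciSup]
    exact ciSup_mono (Finite.bddAbove_range _) (fun i => habs i)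
  · have hp1 : (1 : ℝ≥0∞) ≤ p := Fact.out
    have hpt : 0 < p.toReal := by
      have := ENNReal.toReal_mono hp hp1
      simpa using lt_of_lt_of_le one_pos this
    rw [PiLp.norm_eq_sum hpt, PiLp.norm_eq_sum hpt]
    apply Real.rpow_le_rpow (by positivity) _ (by positivity)
    apply Finset.sum_le_sum
    intro i _
    exact Real.rpow_le_rpow (abs_nonneg _) (habs i) hpt.le

lemma pNorm_add_le (K : ℕ) (p : ℝ≥0∞) [Fact (1 ≤ p)] (a b : Fin (K + 1) → ℝ) :
    pNorm K p (a + b) ≤ pNorm K p a + pNorm K p b := by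
  unfold pNorm
  have : (WithLp.equiv p (Fin (K + 1) → ℝ)).symm (a + b) =
      (WithLp.equiv p (Fin (K + 1) → ℝ)).symm a +
        (WithLp.equiv p (Fin (K + 1) → ℝ)).symm b := rfl
  rw [this]
  exact norm_add_le _ _

end Aux

/-- the `p`-norm network distance satisfies the triangle inequality. -/
theorem dNp_triangle (K : ℕ) (p : ℝ≥0∞) [Fact (1 ≤ p)]
    (X Y Z : Type) [Fintype X] [Nonempty X] [Fintype Y] [Nonempty Y] [Fintype Z] [Nonempty Z]
    (NX : HONetwork K X) (NY : HONetwork K Y) (NZ : HONetwork K Z) :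
    dNp p NX NY ≤ dNp p NX NZ + dNp p NZ NY := by
  set S1 := { v : ℝ | ∃ C : Set (X × Z), IsCorrespondence C ∧
    v = pNorm K p (fun k : Fin (K + 1) => Gamma NX NZ (k : ℕ) C) } with hS1
  set S2 := { v : ℝ | ∃ C : Set (Z × Y), IsCorrespondence C ∧
    v = pNorm K p (fun k : Fin (K + 1) => Gamma NZ NY (k : ℕ) C) } with hS2
  have hUnivX : IsCorrespondence (Set.univ : Set (X × Z)) :=
    ⟨fun x => ⟨Classical.arbitrary Z, trivial⟩, fun z => ⟨Classical.arbitrary X, trivial⟩⟩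
  have hUnivZ : IsCorrespondence (Set.univ : Set (Z × Y)) :=
    ⟨fun z => ⟨Classical.arbitrary Y, trivial⟩, fun y => ⟨Classical.arbitrary Z, trivial⟩⟩
  have hne1 : S1.Nonempty := ⟨_, Set.univ, hUnivX, rfl⟩
  have hne2 : S2.Nonempty := ⟨_, Set.univ, hUnivZ, rfl⟩
  have hbd : BddBelow { v : ℝ | ∃ C : Set (X × Y), IsCorrespondence C ∧
      v = pNorm K p (fun k : Fin (K + 1) => Gamma NX NY (k : ℕ) C) } := by
    refine ⟨0, ?_⟩
    rintro v ⟨C, -, rfl⟩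
    exact pNorm_nonneg K p _
  have hkey : ∀ s1 ∈ S1, ∀ s2 ∈ S2, dNp p NX NY ≤ s1 + s2 := by
    rintro s1 ⟨C1, hC1, rfl⟩ s2 ⟨C2, hC2, rfl⟩
    have hmem : pNorm K p (fun k : Fin (K + 1) => Gamma NX NY (k : ℕ) (compCorr C1 C2)) ∈
        { v : ℝ | ∃ C : Set (X × Y), IsCorrespondence C ∧
          v = pNorm K p (fun k : Fin (K + 1) => Gamma NX NY (k : ℕ) C) } :=
      ⟨compCorr C1 C2, compCorr_isCorr hC1 hC2, rfl⟩
    refine (csInf_le hbd hmem).trans ?_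
    calc pNorm K p (fun k : Fin (K + 1) => Gamma NX NY (k : ℕ) (compCorr C1 C2))
        ≤ pNorm K p ((fun k : Fin (K + 1) => Gamma NX NZ (k : ℕ) C1) +
            (fun k : Fin (K + 1) => Gamma NZ NY (k : ℕ) C2)) := by
          apply pNorm_mono K p
          · intro i; exact gamma_nonneg NX NY _ _
          · intro i
            exact gamma_comp_le NX NZ NY (Nat.lt_succ_iff.mp i.isLt) C1 C2
      _ ≤ _ := pNorm_add_le K p _ _
  show dNp p NX NY ≤ sInf S1 + sInf S2
  rw [← sub_le_iff_le_add]
  apply le_csInf hne1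
  intro s1 hs1
  rw [sub_le_iff_le_add, add_comm, ← sub_le_iff_le_add]
  apply le_csInf hne2
  intro s2 hs2
  rw [sub_le_iff_le_add, add_comm]
  exact hkey s1 hs1 s2 hs2
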